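/- Drop N balls uniformly and independently at random into B bins, and let I_j be the indicator that bin j contains exactly one ball. If B ≥ N + √N or B ≤ N - √N, then for every subset S of {1,...,B}, Pr[∧_{j∈S} I_j = 1] ≤ ∏_{j∈S} Pr[I_j = 1]. -/

import Mathlib

open Finset


lemma myB1 (n : ℕ) (c : ℝ) (hc : 1 ≤ c) :
    c^(2*n)*(c^2+(n:ℝ)+1) ≤ (c^2+1)^(n+1) := by
  induction n with
  | zero => norm_num
  | succ n ih =>
    have hc0 : (0:ℝ) ≤ c := by linarith
    have step1 : c^(2*(n+1))*(c^2+((n+1:ℕ):ℝ)+1) = (c^(2*n)*(c^2+(n:ℝ)+1))*c^2 + c^(2*n+2) := by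
      push_cast; ring
    rw [step1]
    have h2 : (c^(2*n)*(c^2+(n:ℝ)+1))*c^2 ≤ (c^2+1)^(n+1)*c^2 :=
      mul_le_mul_of_nonneg_right ih (by positivity)
    have h3 : c^(2*n+2) ≤ (c^2+1)^(n+1) := by
      have : c^(2*n+2) = (c^2)^(n+1) := by ring
      rw [this]
      exact pow_le_pow_left₀ (by positivity) (by linarith) _
    have h4 : (c^2+1)^(n+1+1) = (c^2+1)^(n+1)*c^2 + (c^2+1)^(n+1) := by ring
    rw [h4]; linarith

-- key polynomial inequality (lemma A)
lemma myA (n : ℕ) (c : ℝ) (hc : 1 ≤ c) (h : ((n:ℝ)+2) ≤ (c-((n:ℝ)+1))^2) :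
    ((n:ℝ)+1)*(c-1)^n*(c+1)^(n+2) ≤ ((n:ℝ)+2)*c^(2*n+2) := by
  have hc0 : (0:ℝ) ≤ c := by linarith
  have h14 : (1:ℝ) ≤ c^4 := one_le_pow₀ hc
  have hpos : (0:ℝ) < (c^2+1)^n := by positivity
  rw [← mul_le_mul_iff_of_pos_right hpos]
  have key1 : ((n:ℝ)+1)*(c-1)^n*(c+1)^(n+2) * (c^2+1)^n
      = ((n:ℝ)+1)*(c^4-1)^n*(c+1)^2 := by
    have e : (c-1)^n*(c+1)^(n+2)*(c^2+1)^n = ((c-1)*(c+1)*(c^2+1))^n*(c+1)^2 := by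
      rw [mul_pow, mul_pow]; ring
    have e2 : ((c-1)*(c+1)*(c^2+1)) = c^4-1 := by ring
    calc ((n:ℝ)+1)*(c-1)^n*(c+1)^(n+2) * (c^2+1)^n
        = ((n:ℝ)+1)*((c-1)^n*(c+1)^(n+2)*(c^2+1)^n) := by ring
      _ = ((n:ℝ)+1)*(((c-1)*(c+1)*(c^2+1))^n*(c+1)^2) := by rw [e]
      _ = ((n:ℝ)+1)*(c^4-1)^n*(c+1)^2 := by rw [e2]; ring
  rw [key1]
  have h4n : (c^4-1)^n ≤ (c^4)^n :=
    pow_le_pow_left₀ (by linarith) (by linarith) _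
  have hstep1 : ((n:ℝ)+1)*(c^4-1)^n*(c+1)^2 ≤ ((n:ℝ)+1)*(c^4)^n*(c+1)^2 := by
    have hnn : (0:ℝ) ≤ ((n:ℝ)+1)*(c+1)^2 := by positivity
    calc ((n:ℝ)+1)*(c^4-1)^n*(c+1)^2 = (((n:ℝ)+1)*(c+1)^2)*(c^4-1)^n := by ring
      _ ≤ (((n:ℝ)+1)*(c+1)^2)*(c^4)^n := mul_le_mul_of_nonneg_left h4n hnn
      _ = ((n:ℝ)+1)*(c^4)^n*(c+1)^2 := by ring
  have hB3 : ((n:ℝ)+1)*(c+1)^2 ≤ ((n:ℝ)+2)*(c^2+(n:ℝ)) := by nlinarith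
  have hstep2 : ((n:ℝ)+1)*(c^4)^n*(c+1)^2 ≤ ((n:ℝ)+2)*(c^4)^n*(c^2+(n:ℝ)) := by
    have hp : (0:ℝ) ≤ (c^4)^n := by positivity
    calc ((n:ℝ)+1)*(c^4)^n*(c+1)^2 = (c^4)^n*(((n:ℝ)+1)*(c+1)^2) := by ring
      _ ≤ (c^4)^n*(((n:ℝ)+2)*(c^2+(n:ℝ))) := mul_le_mul_of_nonneg_left hB3 hp
      _ = ((n:ℝ)+2)*(c^4)^n*(c^2+(n:ℝ)) := by ring
  have hstep3 : ((n:ℝ)+2)*(c^4)^n*(c^2+(n:ℝ)) ≤ ((n:ℝ)+2)*c^(2*n+2) * (c^2+1)^n := by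
    rcases Nat.eq_zero_or_pos n with hn | hn
    · subst hn; norm_num
    · obtain ⟨m, rfl⟩ : ∃ m, n = m + 1 := ⟨n-1, (Nat.succ_pred_eq_of_pos hn).symm⟩
      have hb := myB1 m c hc
      have hK : (0:ℝ) ≤ ((m:ℝ)+3)*c^(2*m+4) := by positivity
      have hmul := mul_le_mul_of_nonneg_left hb hK
      have eL : (((m+1:ℕ):ℝ)+2)*(c^4)^(m+1)*(c^2+((m+1:ℕ):ℝ))
          = (((m:ℝ)+3)*c^(2*m+4)) * (c^(2*m)*(c^2+(m:ℝ)+1)) := by push_cast; ring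
      have eR : (((m+1:ℕ):ℝ)+2)*c^(2*(m+1)+2) * (c^2+1)^(m+1)
          = (((m:ℝ)+3)*c^(2*m+4)) * (c^2+1)^(m+1) := by push_cast; ring
      rw [eL, eR]; exact hmul
  linarith

/-- number of ways to have `t` prescribed bins with exactly one ball -/
def Dc (N B t : ℕ) : ℕ := N.descFactorial t * (B - t)^(N - t)

lemma Dc_zero (N B : ℕ) : Dc N B 0 = B ^ N := by simp [Dc]

lemma Dc_LC (N B t : ℕ) (hyp2 : (N:ℝ) ≤ ((B:ℝ)-N)^2) (ht : t+2 ≤ B) :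
    (Dc N B (t+2) : ℝ) * (Dc N B t : ℝ) ≤ (Dc N B (t+1) : ℝ)^2 := by
  rcases lt_or_ge N (t+2) with hN | hN
  · have h0 : N.descFactorial (t+2) = 0 := Nat.descFactorial_eq_zero_iff_lt.2 hN
    simp only [Dc, h0, Nat.zero_mul, Nat.cast_zero, zero_mul]
    positivity
  · obtain ⟨n, rfl⟩ : ∃ n, N = t+2+n := ⟨N-(t+2), by omega⟩
    obtain ⟨b, rfl⟩ : ∃ b, B = t+2+b := ⟨B-(t+2), by omega⟩
    set N := t+2+n with hNdef
    set B := t+2+b with hBdef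
    have e1 : N - (t+2) = n := by omega
    have e2 : N - (t+1) = n+1 := by omega
    have e3 : N - t = n+2 := by omega
    have f1 : B - (t+2) = b := by omega
    have f2 : B - (t+1) = b+1 := by omega
    have f3 : B - t = b+2 := by omega
    have d2 : N.descFactorial (t+2) = (n+1) * N.descFactorial (t+1) := by
      rw [Nat.descFactorial_succ, e2]
    have d1 : N.descFactorial (t+1) = (n+2) * N.descFactorial t := by
      rw [Nat.descFactorial_succ, e3]
    simp only [Dc, e1, e2, e3, f1, f2, f3, d2, d1]
    push_cast
    have key := myA n ((b:ℝ)+1) (by norm_num)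
      (by
        have : ((b:ℝ)+1) - ((n:ℝ)+1) = (B:ℝ) - (N:ℝ) := by push_cast [hNdef, hBdef]; ring
        rw [this]
        have : ((n:ℝ)+2) ≤ (N:ℝ) := by push_cast [hNdef]; linarith [Nat.cast_nonneg (α := ℝ) t]
        linarith [hyp2])
    have hnn : (0:ℝ) ≤ ((n:ℝ)+2) * (N.descFactorial t : ℝ) * (((n:ℝ)+2) * (N.descFactorial t : ℝ)) := by positivity
    have hmul := mul_le_mul_of_nonneg_left key
      (by positivity : (0:ℝ) ≤ ((n:ℝ)+2) * (N.descFactorial t : ℝ) * ((N.descFactorial t : ℝ)))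
    calc ((n:ℝ)+1) * ((n+2) * (N.descFactorial t : ℝ)) * ((b:ℝ))^n * ((N.descFactorial t:ℝ) * ((b:ℝ)+2)^(n+2))
        = (((n:ℝ)+2) * (N.descFactorial t : ℝ) * ((N.descFactorial t : ℝ))) * (((n:ℝ)+1)*(((b:ℝ)+1)-1)^n*(((b:ℝ)+1)+1)^(n+2)) := by ring_nf
      _ ≤ (((n:ℝ)+2) * (N.descFactorial t : ℝ) * ((N.descFactorial t : ℝ))) * (((n:ℝ)+2)*((b:ℝ)+1)^(2*n+2)) := hmul
      _ = (((n:ℝ)+2) * (N.descFactorial t:ℝ) * ((b:ℝ)+1)^(n+1))^2 := by ring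

lemma Dc_step (N B : ℕ) (hyp2 : (N:ℝ) ≤ ((B:ℝ)-N)^2) :
    ∀ t, t+1 ≤ B → (Dc N B (t+1) : ℝ) * (B:ℝ)^N ≤ (Dc N B t : ℝ) * (Dc N B 1 : ℝ) := by
  intro t
  induction t with
  | zero => intro _; rw [Dc_zero]; push_cast; ring_nf; exact le_refl _
  | succ t ih =>
    intro ht
    have ih' := ih (by omega)
    rcases Nat.eq_zero_or_pos (Dc N B t) with h0 | hpos
    · -- Dc N B t = 0 forces descFactorial t = 0 (since B - t ≥ 2 > 0), so N < t, so Dc (t+2) = 0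
      have hBt : 0 < B - t := by omega
      have hdf : N.descFactorial t = 0 := by
        rcases Nat.mul_eq_zero.1 h0 with h | h
        · exact h
        · exact absurd h (by positivity)
      have hNt : N < t := Nat.descFactorial_eq_zero_iff_lt.1 hdf
      have : N.descFactorial (t+2) = 0 := Nat.descFactorial_eq_zero_iff_lt.2 (by omega)
      simp only [Dc, this, Nat.zero_mul, Nat.cast_zero, zero_mul]
      positivity
    · have hLC := Dc_LC N B t hyp2 ht
      have hDpos : (0:ℝ) < (Dc N B t : ℝ) := by exact_mod_cast hpos
      rw [← mul_le_mul_iff_of_pos_right hDpos]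
      have h1 : (Dc N B (t+1+1) : ℝ) * (B:ℝ)^N * (Dc N B t : ℝ)
          = ((Dc N B (t+2) : ℝ) * (Dc N B t : ℝ)) * (B:ℝ)^N := by ring
      rw [h1]
      calc ((Dc N B (t+2) : ℝ) * (Dc N B t : ℝ)) * (B:ℝ)^N
          ≤ (Dc N B (t+1) : ℝ)^2 * (B:ℝ)^N := by
            apply mul_le_mul_of_nonneg_right hLC (by positivity)
        _ = (Dc N B (t+1) : ℝ) * ((Dc N B (t+1) : ℝ) * (B:ℝ)^N) := by ring
        _ ≤ (Dc N B (t+1) : ℝ) * ((Dc N B t : ℝ) * (Dc N B 1 : ℝ)) := by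
            apply mul_le_mul_of_nonneg_left ih' (by positivity)
        _ = (Dc N B (t+1) : ℝ) * (Dc N B 1 : ℝ) * (Dc N B t : ℝ) := by ring

lemma Dc_main (N B : ℕ) (hyp2 : (N:ℝ) ≤ ((B:ℝ)-N)^2) (hB : 1 ≤ B) :
    ∀ k, k ≤ B → (Dc N B k : ℝ) / (B:ℝ)^N ≤ ((Dc N B 1 : ℝ) / (B:ℝ)^N)^k := by
  have hBpos : (0:ℝ) < (B:ℝ)^N := by positivity
  intro k
  induction k with
  | zero => intro _; rw [Dc_zero]; push_cast; rw [div_self (ne_of_gt hBpos)]; simp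
  | succ k ih =>
    intro hk
    have ih' := ih (by omega)
    have hstep := Dc_step N B hyp2 k (by omega)
    have h2 : (Dc N B (k+1) : ℝ) / (B:ℝ)^N ≤ ((Dc N B k : ℝ) / (B:ℝ)^N) * ((Dc N B 1 : ℝ) / (B:ℝ)^N) := by
      rw [div_mul_div_comm, div_le_div_iff₀ hBpos (by positivity)]
      calc (Dc N B (k+1) : ℝ) * ((B:ℝ)^N * (B:ℝ)^N)
          = ((Dc N B (k+1) : ℝ) * (B:ℝ)^N) * (B:ℝ)^N := by ring
        _ ≤ ((Dc N B k : ℝ) * (Dc N B 1 : ℝ)) * (B:ℝ)^N :=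
            mul_le_mul_of_nonneg_right hstep (le_of_lt hBpos)
        _ = (Dc N B k : ℝ) * (Dc N B 1 : ℝ) * (B:ℝ)^N := by ring
    calc (Dc N B (k+1) : ℝ) / (B:ℝ)^N
        ≤ ((Dc N B k : ℝ) / (B:ℝ)^N) * ((Dc N B 1 : ℝ) / (B:ℝ)^N) := h2
      _ ≤ ((Dc N B 1 : ℝ) / (B:ℝ)^N)^k * ((Dc N B 1 : ℝ) / (B:ℝ)^N) := by
          apply mul_le_mul_of_nonneg_right ih' (by positivity)
      _ = ((Dc N B 1 : ℝ) / (B:ℝ)^N)^(k+1) := by ring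


lemma count_le (N B : ℕ) (S : Finset (Fin B)) (f : Fin N → Fin B)
    (hf : ∀ j ∈ S, (univ.filter (fun i : Fin N => f i = j)).card = 1) : S.card ≤ N := by
  classical
  have hdisj : ∀ j1 ∈ S, ∀ j2 ∈ S, j1 ≠ j2 →
      Disjoint (univ.filter (fun i : Fin N => f i = j1)) (univ.filter (fun i : Fin N => f i = j2)) := by
    intro j1 _ j2 _ hne
    simp only [Finset.disjoint_left, mem_filter]
    rintro i ⟨_, h1⟩ ⟨_, h2⟩
    exact hne (h1 ▸ h2 ▸ rfl)
  have hcard := Finset.card_biUnion hdisj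
  have hsum : ∑ j ∈ S, (univ.filter (fun i : Fin N => f i = j)).card = S.card := by
    rw [Finset.sum_congr rfl hf]; simp
  calc S.card = (S.biUnion (fun j => univ.filter (fun i : Fin N => f i = j))).card := by
        rw [hcard, hsum]
    _ ≤ (univ : Finset (Fin N)).card := Finset.card_le_card (subset_univ _)
    _ = N := by simp

noncomputable def phiEmb (N B : ℕ) (S : Finset (Fin B)) [Nonempty (↥S ↪ Fin N)]
    (f : Fin N → Fin B) : ↥S ↪ Fin N :=
  if h : ∀ j ∈ S, (univ.filter (fun i : Fin N => f i = j)).card = 1 then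
    ⟨fun j => (univ.filter (fun i : Fin N => f i = j.1)).min'
        (Finset.card_pos.1 (by rw [h j.1 j.2]; exact Nat.one_pos)), by
      intro j1 j2 he
      have h1 := Finset.min'_mem (univ.filter (fun i : Fin N => f i = j1.1))
        (Finset.card_pos.1 (by rw [h j1.1 j1.2]; exact Nat.one_pos))
      have h2 := Finset.min'_mem (univ.filter (fun i : Fin N => f i = j2.1))
        (Finset.card_pos.1 (by rw [h j2.1 j2.2]; exact Nat.one_pos))
      rw [mem_filter] at h1 h2
      apply Subtype.ext
      rw [← h1.2, ← h2.2]
      exact congrArg f he⟩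
  else Classical.arbitrary _

lemma phiEmb_spec (N B : ℕ) (S : Finset (Fin B)) [Nonempty (↥S ↪ Fin N)]
    (f : Fin N → Fin B) (g : ↥S ↪ Fin N) :
    ((∀ j ∈ S, (univ.filter (fun i : Fin N => f i = j)).card = 1) ∧ phiEmb N B S f = g)
    ↔ ∀ j (hj : j ∈ S), univ.filter (fun i : Fin N => f i = j) = {g ⟨j, hj⟩} := by
  constructor
  · rintro ⟨hP, hphi⟩ j hj
    obtain ⟨a, ha⟩ := Finset.card_eq_one.1 (hP j hj)
    have : phiEmb N B S f ⟨j, hj⟩ = (univ.filter (fun i : Fin N => f i = j)).min'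
        (Finset.card_pos.1 (by rw [hP j hj]; exact Nat.one_pos)) := by
      rw [phiEmb, dif_pos hP]
      rfl
    rw [hphi] at this
    have hmem : g ⟨j, hj⟩ ∈ univ.filter (fun i : Fin N => f i = j) := by
      rw [this]; exact Finset.min'_mem _ _
    rw [ha] at hmem
    rw [ha, Finset.mem_singleton.1 hmem]
  · intro hchar
    have hP : ∀ j ∈ S, (univ.filter (fun i : Fin N => f i = j)).card = 1 := by
      intro j hj; rw [hchar j hj]; simp
    refine ⟨hP, ?_⟩
    apply DFunLike.ext
    intro j
    have : phiEmb N B S f j = (univ.filter (fun i : Fin N => f i = j.1)).min'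
        (Finset.card_pos.1 (by rw [hP j.1 j.2]; exact Nat.one_pos)) := by
      rw [phiEmb, dif_pos hP]
      rfl
    rw [this]
    have h2 := hchar j.1 j.2
    simp_rw [h2, Finset.min'_singleton]

lemma fiber_card (N B : ℕ) (S : Finset (Fin B)) (g : ↥S ↪ Fin N) :
    (univ.filter (fun f : Fin N → Fin B =>
      ∀ j, ∀ hj : j ∈ S, univ.filter (fun i : Fin N => f i = j) = {g ⟨j, hj⟩})).card
    = (B - S.card)^(N - S.card) := by
  classical
  set R : Finset (Fin N) := Finset.univ.map g with hRdef
  have hR : ∀ i : Fin N, i ∈ R ↔ ∃ j' : ↥S, g j' = i := by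
    intro i; simp [hRdef, Finset.mem_map]
  have htcard : (univ : Finset ({i : Fin N // i ∉ R} → {j : Fin B // j ∉ S})).card
      = (B - S.card)^(N - S.card) := by
    rw [Finset.card_univ, Fintype.card_fun]
    congr 1
    · rw [Fintype.card_subtype_compl]
      congr 1
      · exact Fintype.card_fin B
      · rw [Fintype.card_coe]
    · rw [Fintype.card_subtype_compl]
      congr 1
      · exact Fintype.card_fin N
      · rw [Fintype.card_coe, Finset.card_map, Finset.card_univ, Fintype.card_coe]
  rw [← htcard]
  refine Finset.card_bij'
    (i := fun f hf => fun p : {i : Fin N // i ∉ R} =>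
      (⟨f p.1, by
        have hprop := (Finset.mem_filter.1 hf).2
        intro hmem
        have h2 := hprop (f p.1) hmem
        have : p.1 ∈ univ.filter (fun i : Fin N => f i = f p.1) := by
          simp
        rw [h2, Finset.mem_singleton] at this
        apply p.2
        rw [hR]
        exact ⟨⟨f p.1, hmem⟩, this.symm⟩⟩ : {j : Fin B // j ∉ S}))
    (j := fun h _ => fun i : Fin N =>
      if hi : ∃ j' : ↥S, g j' = i then (hi.choose : ↥S).1
      else (h ⟨i, fun hmem => hi ((hR i).1 hmem)⟩).1)
    ?_ ?_ ?_ ?_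
  case refine_1 => intro f hf; exact Finset.mem_univ _
  case refine_2 =>
    intro h _
    rw [Finset.mem_filter]
    refine ⟨Finset.mem_univ _, ?_⟩
    intro j hj
    ext i
    simp only [Finset.mem_filter, Finset.mem_univ, true_and, Finset.mem_singleton]
    constructor
    · intro hji
      by_cases hi : ∃ j' : ↥S, g j' = i
      · rw [dif_pos hi] at hji
        have he : hi.choose = ⟨j, hj⟩ := Subtype.ext hji
        rw [← hi.choose_spec, he]
      · rw [dif_neg hi] at hji
        exact absurd (hji ▸ (h ⟨i, fun hmem => hi ((hR i).1 hmem)⟩).2) (fun hc => hc hj)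
    · intro hij
      have hi : ∃ j' : ↥S, g j' = i := ⟨⟨j, hj⟩, hij.symm⟩
      rw [dif_pos hi]
      have : g hi.choose = g ⟨j, hj⟩ := by rw [hi.choose_spec, hij]
      have := g.injective this
      rw [this]
  case refine_3 =>
    intro f hf
    funext i
    by_cases hi : ∃ j' : ↥S, g j' = i
    · simp only [dif_pos hi]
      have hprop := (Finset.mem_filter.1 hf).2
      have h2 := hprop hi.choose.1 hi.choose.2
      have hmem : g ⟨hi.choose.1, hi.choose.2⟩ ∈ univ.filter (fun i' : Fin N => f i' = hi.choose.1) := by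
        rw [h2]; exact Finset.mem_singleton_self _
      rw [Finset.mem_filter] at hmem
      have : g ⟨hi.choose.1, hi.choose.2⟩ = i := hi.choose_spec
      rw [this] at hmem
      exact hmem.2.symm
    · simp only [dif_neg hi]
  case refine_4 =>
    intro h _
    funext p
    apply Subtype.ext
    show (if hi : ∃ j' : ↥S, g j' = p.1 then (hi.choose : ↥S).1
      else (h ⟨p.1, fun hmem => hi ((hR p.1).1 hmem)⟩).1) = (h p).1
    have hi : ¬ ∃ j' : ↥S, g j' = p.1 := fun he => p.2 ((hR p.1).2 he)
    rw [dif_neg hi]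

lemma count_eq (N B : ℕ) (S : Finset (Fin B)) :
    (univ.filter (fun f : Fin N → Fin B =>
      ∀ j ∈ S, (univ.filter (fun i : Fin N => f i = j)).card = 1)).card = Dc N B S.card := by
  classical
  rcases lt_or_ge N S.card with hlt | hk
  · have hempty : (univ.filter (fun f : Fin N → Fin B =>
        ∀ j ∈ S, (univ.filter (fun i : Fin N => f i = j)).card = 1)) = ∅ := by
      rw [Finset.filter_eq_empty_iff]
      intro f _ hf
      exact absurd (count_le N B S f hf) (by omega)
    rw [hempty]
    simp [Dc, Nat.descFactorial_eq_zero_iff_lt.2 hlt]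
  · have hNE : Nonempty (↥S ↪ Fin N) := Function.Embedding.nonempty_of_card_le
      (by rw [Fintype.card_coe, Fintype.card_fin]; exact hk)
    rw [Finset.card_eq_sum_card_fiberwise
      (f := phiEmb N B S) (t := (univ : Finset (↥S ↪ Fin N))) (fun x _ => Finset.mem_univ _)]
    have hfib : ∀ g ∈ (univ : Finset (↥S ↪ Fin N)),
        ((univ.filter (fun f : Fin N → Fin B =>
          ∀ j ∈ S, (univ.filter (fun i : Fin N => f i = j)).card = 1)).filter
            (fun f => phiEmb N B S f = g)).card = (B - S.card)^(N - S.card) := by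
      intro g _
      rw [Finset.filter_filter]
      have heq : (univ.filter (fun f : Fin N → Fin B =>
          (∀ j ∈ S, (univ.filter (fun i : Fin N => f i = j)).card = 1) ∧ phiEmb N B S f = g))
          = univ.filter (fun f : Fin N → Fin B =>
            ∀ j, ∀ hj : j ∈ S, univ.filter (fun i : Fin N => f i = j) = {g ⟨j, hj⟩}) := by
        apply Finset.filter_congr
        intro f _
        exact phiEmb_spec N B S f g
      rw [heq, fiber_card]
    rw [Finset.sum_congr rfl hfib, Finset.sum_const, Finset.card_univ,
      Fintype.card_embedding_eq, Fintype.card_coe, Fintype.card_fin, smul_eq_mul]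
    rfl


theorem singletons_negatively_correlated (N B : ℕ)
    (hyp : (B : ℝ) ≥ N + Real.sqrt N ∨ (B : ℝ) ≤ N - Real.sqrt N)
    (S : Finset (Fin B)) :
    ((Finset.univ.filter (fun f : Fin N → Fin B =>
        ∀ j ∈ S, (Finset.univ.filter (fun i : Fin N => f i = j)).card = 1)).card : ℝ) /
        B ^ N ≤
      ∏ j ∈ S,
        ((Finset.univ.filter (fun f : Fin N → Fin B =>
          (Finset.univ.filter (fun i : Fin N => f i = j)).card = 1)).card : ℝ) / B ^ N := by
  classical
  have hyp2 : (N:ℝ) ≤ ((B:ℝ) - N)^2 := by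
    rcases hyp with h | h
    · nlinarith [Real.sq_sqrt (Nat.cast_nonneg (α := ℝ) N), Real.sqrt_nonneg (N:ℝ)]
    · nlinarith [Real.sq_sqrt (Nat.cast_nonneg (α := ℝ) N), Real.sqrt_nonneg (N:ℝ)]
  have hsingle : ∀ j : Fin B, (univ.filter (fun f : Fin N → Fin B =>
      (univ.filter (fun i : Fin N => f i = j)).card = 1)).card = Dc N B 1 := by
    intro j
    have h1 := count_eq N B {j}
    rw [Finset.card_singleton] at h1
    rw [← h1]
    congr 1
    apply Finset.filter_congr
    intro f _
    simp
  have hprod : ∏ j ∈ S, ((univ.filter (fun f : Fin N → Fin B =>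
        (univ.filter (fun i : Fin N => f i = j)).card = 1)).card : ℝ) / (B:ℝ)^N
      = ((Dc N B 1 : ℝ) / (B:ℝ)^N)^S.card := by
    rw [Finset.prod_congr rfl (fun j _ => by rw [hsingle j]), Finset.prod_const]
  rw [count_eq, hprod]
  rcases Nat.eq_zero_or_pos B with hB | hB
  · subst hB
    have hS : S = ∅ := Finset.eq_empty_of_isEmpty S
    rw [hS, Finset.card_empty, pow_zero]
    rcases Nat.eq_zero_or_pos N with hN | hN
    · subst hN; norm_num [Dc]
    · rw [show ((0:ℕ):ℝ) = (0:ℝ) by norm_num, zero_pow (by omega : N ≠ 0), div_zero]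
      norm_num
  · exact Dc_main N B hyp2 hB S.card (le_trans (Finset.card_le_univ S) (by simp))
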